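/- Suppose the configuration (J, K, D₁, D₂) is semi-slant with angle θ. Then B(ωX) = −(sin θ)² · X for every X ∈ D₂. -/

import Mathlib

open RealInnerProductSpace

theorem orthogonalProjection_add_orthogonalProjection_orthogonal' {V : Type*}
    [NormedAddCommGroup V] [InnerProductSpace ℝ V] (K : Submodule ℝ V)
    [K.HasOrthogonalProjection] (w : V) :
    (K.orthogonalProjectionOnto w : V) + (Kᗮ.orthogonalProjectionOnto w : V) = w :=
  K.starProjection_add_starProjection_orthogonal w

theorem eq_orthogonalProjection_of_mem_of_inner_eq_zero' {V : Type*}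
    [NormedAddCommGroup V] [InnerProductSpace ℝ V] {K : Submodule ℝ V}
    [K.HasOrthogonalProjection] {u v : V} (hvm : v ∈ K)
    (hvo : ∀ w ∈ K, ⟪u - v, w⟫ = 0) : (K.orthogonalProjectionOnto u : V) = v :=
  K.eq_starProjection_of_mem_of_inner_eq_zero hvm hvo

/-- If the configuration `(J, K, D₁, D₂)` is semi-slant with angle `θ`,
then `B(ωX) = -(sin θ)² • X` for every `X ∈ D₂`. -/
theorem stmt_10 {V : Type*} [NormedAddCommGroup V] [InnerProductSpace ℝ V]
    [FiniteDimensional ℝ V]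
    (J : V →ₗ[ℝ] V) (hJiso : ∀ v : V, ‖J v‖ = ‖v‖) (hJ2 : ∀ v : V, J (J v) = -v)
    (K : Submodule ℝ V)
    (φ : K → K) (ω : K → Kᗮ) (B : Kᗮ → K)
    (hφ : ∀ X : K, φ X = Submodule.orthogonalProjectionOnto K (J (X : V)))
    (hω : ∀ X : K, ω X = Submodule.orthogonalProjectionOnto Kᗮ (J (X : V)))
    (hB : ∀ Z : Kᗮ, B Z = Submodule.orthogonalProjectionOnto K (J (Z : V)))
    (D₁ D₂ : Submodule ℝ V) (hD₁K : D₁ ≤ K) (hJD₁ : D₁.map J = D₁)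
    (hD₂ : D₂ = D₁ᗮ ⊓ K)
    (θ : ℝ)
    (hslant : ∀ X : V, X ∈ D₂ → X ≠ 0 →
      InnerProductGeometry.angle (J X) (Submodule.orthogonalProjectionOnto D₂ (J X) : V) = θ) :
    ∀ X : K, (X : V) ∈ D₂ → B (ω X) = (-(Real.sin θ ^ 2)) • X := by
  have hD₂K : D₂ ≤ K := hD₂ ▸ inf_le_right
  have hD₂D₁ : D₂ ≤ D₁ᗮ := hD₂ ▸ inf_le_left
  set f : V →ₗᵢ[ℝ] V := ⟨J, hJiso⟩ with hf
  have hJinner : ∀ u v : V, ⟪J u, J v⟫ = ⟪u, v⟫ := fun u v => f.inner_map_map u v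
  have hskew : ∀ u v : V, ⟪J u, v⟫ = -⟪u, J v⟫ := by
    intro u v
    have h := hJinner u (J v)
    rw [hJ2 v, inner_neg_right] at h
    linarith
  -- J maps (things orthogonal to D₁) into D₁ᗮ
  have hJperp : ∀ w : V, (∀ z ∈ D₁, ⟪z, w⟫ = 0) → J w ∈ D₁ᗮ := by
    intro w hw
    rw [Submodule.mem_orthogonal]
    intro y hy
    rw [← hJD₁] at hy
    obtain ⟨z, hz, rfl⟩ := hy
    rw [hJinner]
    exact hw z hz
  -- the projection onto K of a vector in D₁ᗮ lies in D₂
  have hPmem : ∀ v : V, v ∈ D₁ᗮ → ((Submodule.orthogonalProjectionOnto K v : V)) ∈ D₂ := by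
    intro v hv
    rw [hD₂, Submodule.mem_inf]
    refine ⟨?_, (Submodule.orthogonalProjectionOnto K v).2⟩
    rw [Submodule.mem_orthogonal]
    intro y hy
    have hdec := orthogonalProjection_add_orthogonalProjection_orthogonal' K v
    have h1 : ⟪y, v⟫ = 0 := (Submodule.mem_orthogonal D₁ v).mp hv y hy
    have h2 : ⟪y, (Submodule.orthogonalProjectionOnto Kᗮ v : V)⟫ = 0 :=
      Submodule.inner_right_of_mem_orthogonal (hD₁K hy) (Submodule.orthogonalProjectionOnto Kᗮ v).2
    have : ⟪y, (Submodule.orthogonalProjectionOnto K v : V) + (Submodule.orthogonalProjectionOnto Kᗮ v : V)⟫ = 0 := by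
      rw [hdec]; exact h1
    rw [inner_add_right, h2] at this
    linarith
  -- for x ∈ D₂, J x ∈ D₁ᗮ
  have hJD₂ : ∀ x : V, x ∈ D₂ → J x ∈ D₁ᗮ := by
    intro x hx
    exact hJperp x (fun z hz => (Submodule.mem_orthogonal D₁ x).mp (hD₂D₁ hx) z hz)
  -- norm of the K-projection of J x for x ∈ D₂
  have hPD₂ : ∀ x : V, x ∈ D₂ →
      ((Submodule.orthogonalProjectionOnto D₂ (J x) : V)) = (Submodule.orthogonalProjectionOnto K (J x) : V) := by
    intro x hx
    apply eq_orthogonalProjection_of_mem_of_inner_eq_zero' (hPmem _ (hJD₂ x hx))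
    intro w hw
    have h := orthogonalProjection_add_orthogonalProjection_orthogonal' K (J x)
    rw [sub_eq_of_eq_add' h.symm, inner_eq_zero_symm]
    exact Submodule.inner_right_of_mem_orthogonal (hD₂K hw) (Submodule.orthogonalProjectionOnto Kᗮ (J x)).2
  have hnorm : ∀ x : V, x ∈ D₂ → ‖(Submodule.orthogonalProjectionOnto K (J x) : V)‖ = Real.cos θ * ‖x‖ := by
    intro x hx
    rcases eq_or_ne x 0 with rfl | hx0
    · simp
    have hang := hslant x hx hx0
    rw [hPD₂ x hx] at hang
    set p := (Submodule.orthogonalProjectionOnto K (J x) : V) with hp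
    have hip : ⟪J x, p⟫ = ‖p‖ ^ 2 := by
      have hdec := orthogonalProjection_add_orthogonalProjection_orthogonal' K (J x)
      have h2 : ⟪(Submodule.orthogonalProjectionOnto Kᗮ (J x) : V), p⟫ = 0 := by
        rw [inner_eq_zero_symm]
        exact Submodule.inner_right_of_mem_orthogonal (Submodule.orthogonalProjectionOnto K (J x)).2
          (Submodule.orthogonalProjectionOnto Kᗮ (J x)).2
      calc ⟪J x, p⟫ = ⟪p + (Submodule.orthogonalProjectionOnto Kᗮ (J x) : V), p⟫ := by rw [hdec]
        _ = ⟪p, p⟫ + ⟪(Submodule.orthogonalProjectionOnto Kᗮ (J x) : V), p⟫ := inner_add_left _ _ _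
        _ = ‖p‖ ^ 2 := by rw [h2, real_inner_self_eq_norm_sq]; ring
    rcases eq_or_ne p 0 with hp0 | hp0
    · rw [hp0] at hang ⊢
      rw [InnerProductGeometry.angle_zero_right] at hang
      rw [← hang, Real.cos_pi_div_two, norm_zero, zero_mul]
    · have hcos := InnerProductGeometry.cos_angle (J x) p
      rw [hang, hip, hJiso x] at hcos
      have hnx : ‖x‖ ≠ 0 := norm_ne_zero_iff.mpr hx0
      have hnp : ‖p‖ ≠ 0 := norm_ne_zero_iff.mpr hp0
      have : Real.cos θ * ‖x‖ = ‖p‖ := by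
        rw [hcos]
        field_simp
      linarith
  -- polarization: inner products scale by cos² θ
  have hpol : ∀ x y : V, x ∈ D₂ → y ∈ D₂ →
      ⟪(Submodule.orthogonalProjectionOnto K (J x) : V), (Submodule.orthogonalProjectionOnto K (J y) : V)⟫
        = Real.cos θ ^ 2 * ⟪x, y⟫ := by
    intro x y hx hy
    have hxy : x + y ∈ D₂ := D₂.add_mem hx hy
    have h1 := hnorm x hx
    have h2 := hnorm y hy
    have h3 := hnorm (x + y) hxy
    have hadd : (Submodule.orthogonalProjectionOnto K (J (x + y)) : V)
        = (Submodule.orthogonalProjectionOnto K (J x) : V) + (Submodule.orthogonalProjectionOnto K (J y) : V) := by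
      rw [map_add, map_add, Submodule.coe_add]
    rw [hadd] at h3
    have e1 := norm_add_sq_real (Submodule.orthogonalProjectionOnto K (J x) : V)
      (Submodule.orthogonalProjectionOnto K (J y) : V)
    have e2 := norm_add_sq_real x y
    rw [h3, h1, h2] at e1
    linear_combination (Real.cos θ ^ 2 * e2 - e1) / 2
  intro X hX
  -- notation
  set p : V := (Submodule.orthogonalProjectionOnto K (J (X : V)) : V) with hpdef
  set q : V := (Submodule.orthogonalProjectionOnto Kᗮ (J (X : V)) : V) with hqdef
  have hdecX : p + q = J (X : V) :=
    orthogonalProjection_add_orthogonalProjection_orthogonal' K (J (X : V))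
  -- b = B (ω X) as a vector
  have hωX : ((ω X : V)) = q := by rw [hω]
  have hb : ((B (ω X) : V)) = (Submodule.orthogonalProjectionOnto K (J q) : V) := by
    rw [hB, hωX]
  -- B (ω X) ∈ D₂
  have hbmem : ((B (ω X) : V)) ∈ D₂ := by
    rw [hb]
    apply hPmem
    apply hJperp
    intro z hz
    exact Submodule.inner_right_of_mem_orthogonal (hD₁K hz)
      (Submodule.coe_mem (Submodule.orthogonalProjectionOnto Kᗮ (J (X : V))))
  -- key inner product computation: for all y ∈ D₂, ⟪B(ωX) + sin²θ • X, y⟫ = 0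
  have hkey : ∀ y : V, y ∈ D₂ → ⟪((B (ω X) : V)) + (Real.sin θ ^ 2) • (X : V), y⟫ = 0 := by
    intro y hy
    -- ⟪J q, y⟫ = ⟪(proj_K (J q)), y⟫ since y ∈ K
    have hy' : y ∈ K := hD₂K hy
    have hJqy : ⟪J q, y⟫ = ⟪((B (ω X) : V)), y⟫ := by
      rw [hb]
      have hdq := orthogonalProjection_add_orthogonalProjection_orthogonal' K (J q)
      have h2 : ⟪(Submodule.orthogonalProjectionOnto Kᗮ (J q) : V), y⟫ = 0 := by
        rw [inner_eq_zero_symm]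
        exact Submodule.inner_right_of_mem_orthogonal hy' (Submodule.orthogonalProjectionOnto Kᗮ (J q)).2
      calc ⟪J q, y⟫ = ⟪(Submodule.orthogonalProjectionOnto K (J q) : V) + (Submodule.orthogonalProjectionOnto Kᗮ (J q) : V), y⟫ := by
            rw [hdq]
        _ = ⟪(Submodule.orthogonalProjectionOnto K (J q) : V), y⟫ := by rw [inner_add_left, h2, add_zero]
    -- ⟪J p, y⟫ = -cos²θ ⟪X, y⟫
    have hJpy : ⟪J p, y⟫ = -(Real.cos θ ^ 2) * ⟪(X : V), y⟫ := by
      rw [hskew p y]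
      have hdy := orthogonalProjection_add_orthogonalProjection_orthogonal' K (J y)
      have hpK : p ∈ K := (Submodule.orthogonalProjectionOnto K (J (X : V))).2
      have h2 : ⟪p, (Submodule.orthogonalProjectionOnto Kᗮ (J y) : V)⟫ = 0 :=
        Submodule.inner_right_of_mem_orthogonal hpK (Submodule.orthogonalProjectionOnto Kᗮ (J y)).2
      have : ⟪p, J y⟫ = ⟪p, (Submodule.orthogonalProjectionOnto K (J y) : V)⟫ := by
        calc ⟪p, J y⟫ = ⟪p, (Submodule.orthogonalProjectionOnto K (J y) : V) + (Submodule.orthogonalProjectionOnto Kᗮ (J y) : V)⟫ := by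
              rw [hdy]
          _ = ⟪p, (Submodule.orthogonalProjectionOnto K (J y) : V)⟫ := by rw [inner_add_right, h2, add_zero]
      rw [this, hpdef, hpol (X : V) y hX hy]
      ring
    -- J (J X) = -X, so J p + J q = -X
    have hJJ : J p + J q = -(X : V) := by
      rw [← map_add, hdecX, hJ2]
    have hsum : ⟪J p, y⟫ + ⟪J q, y⟫ = -⟪(X : V), y⟫ := by
      rw [← inner_add_left, hJJ, inner_neg_left]
    have hsin : Real.sin θ ^ 2 = 1 - Real.cos θ ^ 2 := by
      have := Real.sin_sq_add_cos_sq θ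
      linarith
    rw [inner_add_left, real_inner_smul_left]
    rw [hJpy, hJqy] at hsum
    rw [hsin]
    linarith
  -- conclude: the vector w := B(ωX) + sin²θ • X lies in D₂ and is ⟂ D₂, so it vanishes
  set w : V := ((B (ω X) : V)) + (Real.sin θ ^ 2) • (X : V) with hw
  have hwmem : w ∈ D₂ := D₂.add_mem hbmem (D₂.smul_mem _ hX)
  have hw0 : w = 0 := by
    have := hkey w hwmem
    exact inner_self_eq_zero.mp this
  have hvec : ((B (ω X) : V)) = (-(Real.sin θ ^ 2)) • (X : V) := by
    rw [neg_smul]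
    exact eq_neg_of_add_eq_zero_left hw0
  apply Subtype.ext
  rw [Submodule.coe_smul]
  exact hvec
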